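/- Let θ be an admissible, primitive, coincidence-free substitution of constant length r in canonical form over a finite alphabet A containing 0, and suppose condition (A) holds with n distinct classes. Then there exist a substitution φ of constant length r on the alphabet B = {0,…,n−1} and a surjective continuous map Ψ : X_θ → X_φ onto the substitution dynamical system (X_φ,σ) satisfying Ψ∘σ = σ∘Ψ and Ψ(x)_i = [x_{i−1}x_i] for all i ∈ ℤ (a 2-block sliding block code); moreover every fiber of Ψ has exactly c elements, where c is the common cardinality of the classes P(i,j,k). -/

import Mathlib

open Set Topology

/-! ### Ellis semigroup of a dynamical system -/

section Ellis

variable {X : Type*} [TopologicalSpace X]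

/-- The Ellis (enveloping) semigroup of a dynamical system `(X, T)`: the closure of
`{T^n : n ∈ ℤ}` in `X → X` with the topology of pointwise convergence. -/
def ellisSemigroup (T : X ≃ₜ X) : Set (X → X) :=
  closure {f : X → X | ∃ n : ℤ, f = ⇑(T.toEquiv ^ n)}

/-- A (left) ideal of the Ellis semigroup. -/
def IsLeftIdealOf (T : X ≃ₜ X) (I : Set (X → X)) : Prop :=
  I.Nonempty ∧ I ⊆ ellisSemigroup T ∧ ∀ p ∈ ellisSemigroup T, ∀ q ∈ I, p ∘ q ∈ I

/-- A minimal left ideal of the Ellis semigroup. -/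
def IsMinimalLeftIdealOf (T : X ≃ₜ X) (I : Set (X → X)) : Prop :=
  IsLeftIdealOf T I ∧ ∀ J, IsLeftIdealOf T J → J ⊆ I → J = I

/-- Two points are proximal iff some element of the Ellis semigroup identifies them. -/
def ProximalIn (T : X ≃ₜ X) (x y : X) : Prop :=
  ∃ p ∈ ellisSemigroup T, p x = p y

end Ellis

/-! ### The shift on bi-infinite sequences and orbit closures -/

section Shift

variable {A : Type*}

/-- The shift map on bi-infinite sequences. -/
def shiftF (A : Type*) : (ℤ → A) → (ℤ → A) := fun x n => x (n + 1)

/-- The inverse shift map on bi-infinite sequences. -/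
def shiftFInv (A : Type*) : (ℤ → A) → (ℤ → A) := fun x n => x (n - 1)

variable [TopologicalSpace A]

/-- The shift-orbit closure of a bi-infinite sequence. -/
def orbitClosure (x : ℤ → A) : Set (ℤ → A) :=
  closure {y | ∃ n : ℤ, y = fun k => x (k + n)}

lemma self_mem_orbitClosure (x : ℤ → A) : x ∈ orbitClosure x :=
  subset_closure ⟨0, by funext k; simp⟩

lemma shiftF_mem_orbitClosure (x : ℤ → A) {y : ℤ → A} (hy : y ∈ orbitClosure x) :
    shiftF A y ∈ orbitClosure x := by
  have hc : Continuous (shiftF A) := continuous_pi fun n => continuous_apply (n + 1)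
  have h1 := image_closure_subset_closure_image
    (s := {y : ℤ → A | ∃ n : ℤ, y = fun k => x (k + n)}) hc (mem_image_of_mem _ hy)
  refine closure_mono ?_ h1
  rintro _ ⟨z, ⟨n, rfl⟩, rfl⟩
  refine ⟨n + 1, ?_⟩
  funext k
  show x (k + 1 + n) = x (k + (n + 1))
  congr 1; ring

lemma shiftFInv_mem_orbitClosure (x : ℤ → A) {y : ℤ → A} (hy : y ∈ orbitClosure x) :
    shiftFInv A y ∈ orbitClosure x := by
  have hc : Continuous (shiftFInv A) := continuous_pi fun n => continuous_apply (n - 1)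
  have h1 := image_closure_subset_closure_image
    (s := {y : ℤ → A | ∃ n : ℤ, y = fun k => x (k + n)}) hc (mem_image_of_mem _ hy)
  refine closure_mono ?_ h1
  rintro _ ⟨z, ⟨n, rfl⟩, rfl⟩
  refine ⟨n - 1, ?_⟩
  funext k
  show x (k - 1 + n) = x (k + (n - 1))
  congr 1; ring

/-- The shift, as a homeomorphism of the orbit closure of `x`. -/
def shiftHomOn (x : ℤ → A) : (orbitClosure x) ≃ₜ (orbitClosure x) where
  toFun y := ⟨shiftF A y.1, shiftF_mem_orbitClosure x y.2⟩
  invFun y := ⟨shiftFInv A y.1, shiftFInv_mem_orbitClosure x y.2⟩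
  left_inv y := by
    apply Subtype.ext; funext k
    show y.1 (k - 1 + 1) = y.1 k
    congr 1; ring
  right_inv y := by
    apply Subtype.ext; funext k
    show y.1 (k + 1 - 1) = y.1 k
    congr 1; ring
  continuous_toFun := Continuous.subtype_mk
    ((continuous_pi fun n => continuous_apply (n + 1)).comp continuous_subtype_val) _
  continuous_invFun := Continuous.subtype_mk
    ((continuous_pi fun n => continuous_apply (n - 1)).comp continuous_subtype_val) _

/-- The set of legal two-letter words of a subshift `Xs`. -/
def legalPairs (Xs : Set (ℤ → A)) : Set (A × A) :=
  {ab | ∃ y ∈ Xs, ∃ i : ℤ, y i = ab.1 ∧ y (i + 1) = ab.2}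

end Shift

/-! ### Substitutions of constant length -/

section Subst

variable {na r : ℕ} [NeZero na] [NeZero r]

/-- `wordIter θ k a j` is the `j`-th letter of the word `θ^k(a)` (of length `r^k`). -/
def wordIter (θ : Fin na → Fin r → Fin na) : ℕ → Fin na → ℕ → Fin na
  | 0, a, _ => a
  | k+1, a, j => wordIter θ k (θ a ⟨(j / r ^ k) % r, Nat.mod_lt _ (NeZero.pos r)⟩) (j % r ^ k)

/-- A bi-infinite fixed point of the substitution `θ`. -/
def IsSubFix (θ : Fin na → Fin r → Fin na) (x : ℤ → Fin na) : Prop :=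
  ∀ (n : ℤ) (m : Fin r), x (r * n + (m : ℕ)) = θ (x n) m

/-- `θ` is admissible: injective on letters and with non-periodic fixed points. -/
def AdmissibleSub (θ : Fin na → Fin r → Fin na) : Prop :=
  Function.Injective θ ∧
  ∀ x : ℤ → Fin na, IsSubFix θ x → ∀ p : ℤ, p ≠ 0 → ∃ k : ℤ, x (k + p) ≠ x k

/-- `θ` is primitive: some power of `θ` maps any letter to a word containing all letters. -/
def PrimitiveSub (θ : Fin na → Fin r → Fin na) : Prop :=
  ∃ k : ℕ, ∀ a b : Fin na, ∃ j < r ^ k, wordIter θ k a j = b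

/-- `θ` is coincidence-free. -/
def CoincidenceFreeSub (θ : Fin na → Fin r → Fin na) : Prop :=
  ∀ a b : Fin na, a ≠ b → ∀ m : Fin r, θ a m ≠ θ b m

/-- `θ` is in canonical form: `θ(a)` begins and ends with `a`. -/
def CanonicalFormSub (θ : Fin na → Fin r → Fin na) : Prop :=
  ∀ a, θ a ⟨0, NeZero.pos r⟩ = a ∧ θ a ⟨r - 1, Nat.sub_lt (NeZero.pos r) one_pos⟩ = a

/-- `HeightData θ xh d m` : `xh` is a bi-infinite fixed point of `θ` with `xh 0 = 0`,
`d` is the gcd of the set `M = {n ≥ 1 : xh n = 0}` of positive occurrences of `0`,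
and `m` is the height `m(θ)`: the largest divisor of `d` coprime to `r`. -/
def HeightData (θ : Fin na → Fin r → Fin na) (xh : ℤ → Fin na) (d m : ℕ) : Prop :=
  IsSubFix θ xh ∧ xh 0 = 0 ∧
  (∀ k : ℕ, 1 ≤ k → xh (k : ℤ) = 0 → d ∣ k) ∧
  (∀ e : ℕ, (∀ k : ℕ, 1 ≤ k → xh (k : ℤ) = 0 → e ∣ k) → e ∣ d) ∧
  0 < m ∧ m ∣ d ∧ Nat.Coprime m r ∧
  ∀ m' : ℕ, m' ∣ d → Nat.Coprime m' r → m' ∣ m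

/-- `z(i) = (min {n : θ(i)_n = 0}) mod m`. -/
noncomputable def subZ (θ : Fin na → Fin r → Fin na) (m : ℕ) (i : Fin na) : ℕ :=
  sInf {n : ℕ | ∃ h : n < r, θ i ⟨n, h⟩ = 0} % m

/-- The class `S_p = {i : z(i) ≡ -p (mod m)}`. -/
def subS (θ : Fin na → Fin r → Fin na) (m : ℕ) (p : ℕ) : Set (Fin na) :=
  {i | Int.ModEq (m : ℤ) (subZ θ m i : ℤ) (-(p : ℤ))}

/-- The set `P(i,j,k) = {θ^k(p)[j, j+1] : p ∈ S_i}`. -/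
def subP (θ : Fin na → Fin r → Fin na) (m : ℕ) (i j k : ℕ) : Set (Fin na × Fin na) :=
  {ab | ∃ p ∈ subS θ m i, ab = (wordIter θ k p j, wordIter θ k p (j + 1))}

/-- The collection of all classes `P(i,j,k)` for `i < m(θ)`, `k ≥ 1`, `0 ≤ j ≤ r^k - 2`. -/
def subClasses (θ : Fin na → Fin r → Fin na) (m : ℕ) : Set (Set (Fin na × Fin na)) :=
  {P | ∃ i < m, ∃ k, 1 ≤ k ∧ ∃ j, j + 2 ≤ r ^ k ∧ P = subP θ m i j k}

/-- Condition (A): the collection of the `P(i,j,k)` is a partition of the set of legal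
two-letter words. -/
def subCondA (θ : Fin na → Fin r → Fin na) (m : ℕ) (Xs : Set (ℤ → Fin na)) : Prop :=
  (∀ C ∈ subClasses θ m, C.Nonempty) ∧
  (⋃₀ subClasses θ m = legalPairs Xs) ∧
  ∀ C ∈ subClasses θ m, ∀ D ∈ subClasses θ m, C = D ∨ Disjoint C D

/-- Data of the quotient substitution `φ` on the alphabet `B = Fin n` of classes:
`c` is the labelling of legal two-letter words by their classes (with the class of words
whose last letter lies in `S_0` labelled `0`), and `φ(b)_0 = b`,
`φ(b)_h = [θ(a_b)[h-1,h]]` for `1 ≤ h ≤ r-1`, where `a_b` is any last letter of a word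
in class `b`. -/
def QuotientSubData {n : ℕ} [NeZero n] (θ : Fin na → Fin r → Fin na) (m : ℕ)
    (Xs : Set (ℤ → Fin na)) (c : Fin na × Fin na → Fin n)
    (φ : Fin n → Fin r → Fin n) : Prop :=
  (∀ b : Fin n, ∃ ab ∈ legalPairs Xs, c ab = b) ∧
  (∀ ab ∈ legalPairs Xs, ∀ cd ∈ legalPairs Xs,
    (c ab = c cd ↔ ∃ C ∈ subClasses θ m, ab ∈ C ∧ cd ∈ C)) ∧
  (∀ ab ∈ legalPairs Xs, c ab = ⟨0, NeZero.pos n⟩ → ab.2 ∈ subS θ m 0) ∧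
  (∀ b : Fin n, φ b ⟨0, NeZero.pos r⟩ = b) ∧
  ∀ b : Fin n, ∀ ab ∈ legalPairs Xs, c ab = b →
    ∀ (h : ℕ) (_ : 1 ≤ h) (hh : h < r),
      φ b ⟨h, hh⟩ = c (θ ab.2 ⟨h - 1, lt_of_le_of_lt (Nat.sub_le h 1) hh⟩, θ ab.2 ⟨h, hh⟩)

/-- The `i`-th column set `C_i = {φ(b)_i : b ∈ B}` of a substitution `φ`. -/
def colSet {n : ℕ} (φ : Fin n → Fin r → Fin n) (i : ℕ) (hi : i < r) : Set (Fin n) :=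
  {b' | ∃ b, φ b ⟨i, hi⟩ = b'}

/-- The number `q` of distinct column sets `C_1, …, C_{r-1}` of `φ`. -/
noncomputable def numColSets {n : ℕ} (φ : Fin n → Fin r → Fin n) : ℕ :=
  {C : Set (Fin n) | ∃ i, ∃ hi : i < r, 1 ≤ i ∧ C = colSet φ i hi}.ncard

/-- The 2-block sliding block code induced by a block map `c`. -/
def PsiMap {A B : Type*} (c : A × A → B) (x : ℤ → A) : ℤ → B :=
  fun i => c (x (i - 1), x i)

end Subst

/-! ### IP sets and IP cluster points -/

/-- A subset of `ℤ` is an IP set if it is the set of finite sums of a sequence of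
distinct integers. -/
def IsIPSet (Q : Set ℤ) : Prop :=
  ∃ g : ℕ → ℤ, Function.Injective g ∧
    Q = {s | ∃ F : Finset ℕ, F.Nonempty ∧ s = ∑ i ∈ F, g i}

/-- `f` is an IP cluster point of the system `(X,T)` along the IP set `P`. -/
def IsIPCP {X : Type*} [TopologicalSpace X] (T : X ≃ₜ X) (f : X → X) (P : Set ℤ) : Prop :=
  ∀ U ∈ nhds f, ∃ Q : Set ℤ, IsIPSet Q ∧ Q ⊆ {k ∈ P | ⇑(T.toEquiv ^ k) ∈ U}

/-! ### Auxiliary lemmas for Statement 5 -/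

section AuxStmt5

variable {na r : ℕ} [NeZero na] [NeZero r] {θ : Fin na → Fin r → Fin na}

lemma wordIter_def' (k : ℕ) (a : Fin na) (j : ℕ) :
    wordIter θ (k+1) a j
      = wordIter θ k (θ a ⟨(j / r ^ k) % r, Nat.mod_lt _ (NeZero.pos r)⟩) (j % r ^ k) := rfl

lemma wordIter_right (k : ℕ) (a : Fin na) (u : ℕ) :
    wordIter θ (k+1) a u
      = θ (wordIter θ k a (u / r)) ⟨u % r, Nat.mod_lt _ (NeZero.pos r)⟩ := by
  induction k generalizing a u with
  | zero =>
    rw [wordIter_def']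
    show θ a _ = θ a _
    congr 1 <;> simp
  | succ k ih =>
    rw [wordIter_def', ih, wordIter_def']
    have h1 : u % r ^ (k + 1) % r = u % r :=
      Nat.mod_mod_of_dvd u (dvd_pow_self r (Nat.succ_ne_zero k))
    have h2 : u % r ^ (k + 1) / r = u / r % r ^ k := by
      rw [pow_succ']; exact Nat.mod_mul_right_div_self u r (r ^ k)
    have h3 : u / r / r ^ k = u / r ^ (k+1) := by
      rw [Nat.div_div_eq_div_mul, ← pow_succ']
    simp only [h1, h2, h3]

lemma wordIter_stable (hcan : CanonicalFormSub θ) {k : ℕ} {j : ℕ} (hj : j < r ^ k)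
    (a : Fin na) : wordIter θ (k+1) a j = wordIter θ k a j := by
  rw [wordIter_def']
  have e1 : (⟨j / r ^ k % r, Nat.mod_lt _ (NeZero.pos r)⟩ : Fin r) = ⟨0, NeZero.pos r⟩ :=
    Fin.ext (by simp [Nat.div_eq_of_lt hj])
  rw [e1, (hcan a).1, Nat.mod_eq_of_lt hj]

lemma wordIter_stable' (hcan : CanonicalFormSub θ) {k k' : ℕ} (hk : k ≤ k') {j : ℕ}
    (hj : j < r ^ k) (a : Fin na) : wordIter θ k' a j = wordIter θ k a j := by
  obtain ⟨d, rfl⟩ := Nat.exists_eq_add_of_le hk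
  induction d with
  | zero => rfl
  | succ d ih =>
    have h : k + (d + 1) = (k + d) + 1 := rfl
    rw [h, wordIter_stable hcan
      (lt_of_lt_of_le hj (Nat.pow_le_pow_right (NeZero.pos r) (Nat.le_add_right k d))),
      ih (Nat.le_add_right k d)]

omit [NeZero na] in
lemma wordIter_colInj (hcf : CoincidenceFreeSub θ) (k : ℕ) {a b : Fin na} (hab : a ≠ b)
    (j : ℕ) : wordIter θ k a j ≠ wordIter θ k b j := by
  induction k generalizing a b j with
  | zero => exact hab
  | succ k ih => exact ih (hcf a b hab _) _

omit [NeZero na] in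
lemma pow_big_nat (hr : 2 ≤ r) (B : ℕ) : ∃ k : ℕ, 1 ≤ k ∧ B ≤ r ^ k := by
  refine ⟨max B 1, le_max_right _ _, ?_⟩
  calc B ≤ 2 ^ B := (Nat.lt_two_pow_self).le
    _ ≤ 2 ^ max B 1 := Nat.pow_le_pow_right (by norm_num) (le_max_left _ _)
    _ ≤ r ^ max B 1 := Nat.pow_le_pow_left hr _

variable {xh : ℤ → Fin na}

lemma fix_expand (hfix : IsSubFix θ xh) (k : ℕ) (t : ℤ) (s : ℕ) (hs : s < r ^ k) :
    xh ((r : ℤ) ^ k * t + s) = wordIter θ k (xh t) s := by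
  induction k generalizing t s with
  | zero =>
    have h0 : s = 0 := Nat.lt_one_iff.mp (by simpa using hs)
    subst h0
    simp [wordIter]
  | succ k ih =>
    have hu : s / r ^ k < r := by
      rw [Nat.div_lt_iff_lt_mul (pow_pos (NeZero.pos r) k)]
      rw [pow_succ'] at hs; exact hs
    have hv : s % r ^ k < r ^ k := Nat.mod_lt _ (pow_pos (NeZero.pos r) k)
    have key : (r : ℤ) ^ (k+1) * t + s
        = (r : ℤ) ^ k * ((r : ℤ) * t + (s / r ^ k : ℕ)) + (s % r ^ k : ℕ) := by
      have hsd : (s : ℤ) = (r ^ k : ℕ) * (s / r ^ k : ℕ) + (s % r ^ k : ℕ) := by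
        exact_mod_cast (Nat.div_add_mod s (r ^ k)).symm
      rw [hsd]; push_cast; ring
    rw [key, ih _ _ hv]
    have h2 : xh ((r : ℤ) * t + (s / r ^ k : ℕ)) = θ (xh t) ⟨s / r ^ k, hu⟩ :=
      hfix t ⟨s / r ^ k, hu⟩
    rw [h2, wordIter_def']
    congr 2
    exact Fin.ext (Nat.mod_eq_of_lt hu).symm

lemma prim_strong (hcan : CanonicalFormSub θ) (hprim : PrimitiveSub θ) :
    ∃ k : ℕ, 1 ≤ k ∧ ∀ a b : Fin na, ∃ j < r ^ k, wordIter θ k a j = b := by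
  obtain ⟨k, hk⟩ := hprim
  refine ⟨k + 1, Nat.le_add_left _ _, fun a b => ?_⟩
  obtain ⟨j, hj, e⟩ := hk a b
  exact ⟨j, lt_of_lt_of_le hj (Nat.pow_le_pow_right (NeZero.pos r) (Nat.le_succ k)),
    by rw [wordIter_stable hcan hj, e]⟩

lemma letter_pos (hfix : IsSubFix θ xh) (hcan : CanonicalFormSub θ)
    (hprim : PrimitiveSub θ) (a : Fin na) :
    ∃ lp : ℕ, 1 ≤ lp ∧ xh (lp : ℤ) = a := by
  obtain ⟨k, hk1, hk⟩ := prim_strong hcan hprim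
  obtain ⟨j, hj, e⟩ := hk (xh 1) a
  refine ⟨r ^ k + j, le_trans (Nat.one_le_iff_ne_zero.mpr (pow_ne_zero k (NeZero.ne r)))
    (Nat.le_add_right _ _), ?_⟩
  have h1 : ((r ^ k + j : ℕ) : ℤ) = (r : ℤ) ^ k * 1 + (j : ℕ) := by push_cast; ring
  rw [h1, fix_expand hfix k 1 j hj, e]

/-- residue index of a letter -/
noncomputable def resIdx (θ : Fin na → Fin r → Fin na) (m : ℕ) (a : Fin na) : ℕ :=
  (m - subZ θ m a) % m

lemma resIdx_lt {m : ℕ} (hm : 0 < m) (a : Fin na) : resIdx θ m a < m :=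
  Nat.mod_lt _ hm

lemma mem_subS_resIdx {m : ℕ} (hm : 0 < m) (a : Fin na) :
    a ∈ subS θ m (resIdx θ m a) := by
  have hz : subZ θ m a < m := Nat.mod_lt _ hm
  show Int.ModEq (m : ℤ) (subZ θ m a : ℤ) (-(((m - subZ θ m a) % m : ℕ) : ℤ))
  refine (ZMod.intCast_eq_intCast_iff _ _ _).mp ?_
  push_cast [ZMod.natCast_mod, Nat.cast_sub hz.le, ZMod.natCast_self]
  ring


omit [NeZero na] [NeZero r] in
lemma orbit_window {A : Type*} [TopologicalSpace A] [DiscreteTopology A]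
    (x : ℤ → A) {z : ℤ → A} (hz : z ∈ orbitClosure x) (F : Finset ℤ) :
    ∃ N : ℤ, ∀ l ∈ F, z l = x (l + N) := by
  have hU : IsOpen {w : ℤ → A | ∀ l ∈ F, w l = z l} := by
    have he : {w : ℤ → A | ∀ l ∈ F, w l = z l}
        = ⋂ l ∈ F, (fun w : ℤ → A => w l) ⁻¹' {z l} := by
      ext w; simp
    rw [he]
    exact isOpen_biInter_finset fun l _ =>
      (isOpen_discrete _).preimage (continuous_apply l)
  obtain ⟨w, hw1, n, rfl⟩ := mem_closure_iff.mp hz _ hU (fun l _ => rfl)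
  exact ⟨n, fun l hl => (hw1 l hl).symm⟩

lemma cluster_closed {X : Type*} [TopologicalSpace X] {f : ℕ → X} {x : X}
    (hx : ClusterPt x (Filter.map f Filter.atTop)) {S : Set X} (hS : IsClosed S)
    (hev : ∀ᶠ W in Filter.atTop, f W ∈ S) : x ∈ S := by
  have h1 : Filter.map f Filter.atTop ≤ Filter.principal S :=
    Filter.le_principal_iff.mpr (Filter.mem_map.mpr hev)
  have h2 : ClusterPt x (Filter.principal S) := hx.mono h1
  rw [← hS.closure_eq]
  exact mem_closure_iff_clusterPt.mpr h2

variable {m : ℕ}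

lemma class_eq (hA : subCondA θ m (orbitClosure xh)) {C D : Set (Fin na × Fin na)}
    (hC : C ∈ subClasses θ m) (hD : D ∈ subClasses θ m) {ab : Fin na × Fin na}
    (h1 : ab ∈ C) (h2 : ab ∈ D) : C = D := by
  rcases hA.2.2 C hC D hD with h | h
  · exact h
  · exact absurd h2 (Set.disjoint_left.mp h h1)

lemma class_legal (hA : subCondA θ m (orbitClosure xh)) {C : Set (Fin na × Fin na)}
    (hC : C ∈ subClasses θ m) {ab : Fin na × Fin na} (h : ab ∈ C) :
    ab ∈ legalPairs (orbitClosure xh) := by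
  rw [← hA.2.1]; exact ⟨C, hC, h⟩

lemma pair_class (hA : subCondA θ m (orbitClosure xh)) {ab : Fin na × Fin na}
    (h : ab ∈ legalPairs (orbitClosure xh)) : ∃ C ∈ subClasses θ m, ab ∈ C := by
  rw [← hA.2.1] at h; exact h

lemma pair_pos (hfix : IsSubFix θ xh) (hcan : CanonicalFormSub θ) (hprim : PrimitiveSub θ)
    (hA : subCondA θ m (orbitClosure xh)) {ab : Fin na × Fin na}
    (hab : ab ∈ legalPairs (orbitClosure xh)) :
    ∃ L : ℕ, 1 ≤ L ∧ xh ((L : ℤ) - 1) = ab.1 ∧ xh (L : ℤ) = ab.2 := by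
  obtain ⟨C, hC, habC⟩ := pair_class hA hab
  obtain ⟨i, him, k, hk1, j, hjk, rfl⟩ := hC
  obtain ⟨p, hpS, habe⟩ := habC
  obtain ⟨lp, hlp1, hlpe⟩ := letter_pos hfix hcan hprim p
  have hrk : 0 < r ^ k := pow_pos (NeZero.pos r) k
  refine ⟨r ^ k * lp + j + 1, by omega, ?_, ?_⟩
  · have e : ((r ^ k * lp + j + 1 : ℕ) : ℤ) - 1 = (r : ℤ) ^ k * (lp : ℤ) + ((j : ℕ) : ℤ) := by
      push_cast; ring
    rw [e, fix_expand hfix k lp j (by omega), hlpe, habe]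
  · have e : ((r ^ k * lp + j + 1 : ℕ) : ℤ) = (r : ℤ) ^ k * (lp : ℤ) + ((j + 1 : ℕ) : ℤ) := by
      push_cast; ring
    rw [e, fix_expand hfix k lp (j+1) (by omega), hlpe, habe]

lemma canon_mem (hfix : IsSubFix θ xh) (h0 : xh 0 = 0) (hm : 0 < m) (J k : ℕ) (hk : 1 ≤ k)
    (hJ : J + 2 ≤ r ^ k) :
    (xh (J : ℤ), xh ((J : ℤ) + 1)) ∈ subP θ m (resIdx θ m 0) J k
      ∧ subP θ m (resIdx θ m 0) J k ∈ subClasses θ m := by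
  constructor
  · refine ⟨0, mem_subS_resIdx hm 0, ?_⟩
    have e2 : (J : ℤ) + 1 = (r : ℤ) ^ k * 0 + ((J + 1 : ℕ) : ℤ) := by push_cast; ring
    have e1 : (J : ℤ) = (r : ℤ) ^ k * 0 + ((J : ℕ) : ℤ) := by push_cast; ring
    rw [e2, fix_expand hfix k 0 (J+1) (by omega)]
    rw [e1, fix_expand hfix k 0 J (by omega), h0]
  · exact ⟨resIdx θ m 0, resIdx_lt hm 0, k, hk, J, hJ, rfl⟩

lemma subP_ncard (hcf : CoincidenceFreeSub θ) (i J k : ℕ) :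
    (subP θ m i J k).ncard = (subS θ m i).ncard := by
  have he : subP θ m i J k
      = (fun p => (wordIter θ k p J, wordIter θ k p (J+1))) '' subS θ m i := by
    ext ab
    exact ⟨fun ⟨p, hp, h⟩ => ⟨p, hp, h.symm⟩, fun ⟨p, hp, h⟩ => ⟨p, hp, h.symm⟩⟩
  rw [he]
  apply Set.ncard_image_of_injective
  intro p q h
  by_contra hne
  exact wordIter_colInj hcf k hne J (congrArg Prod.fst h)

lemma class_ncard (hfix : IsSubFix θ xh) (hcan : CanonicalFormSub θ)
    (hcf : CoincidenceFreeSub θ) (hprim : PrimitiveSub θ) (h0 : xh 0 = 0) (hm : 0 < m)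
    (hr : 2 ≤ r) (hA : subCondA θ m (orbitClosure xh)) :
    ∀ C ∈ subClasses θ m, C.ncard = (subS θ m (resIdx θ m 0)).ncard := by
  intro C hC
  obtain ⟨ab, habC⟩ := hA.1 C hC
  obtain ⟨L, hL1, hLa, hLb⟩ := pair_pos hfix hcan hprim hA (class_legal hA hC habC)
  obtain ⟨k', hk'1, hk'⟩ := pow_big_nat hr (L + 1)
  have hcm := canon_mem (m := m) hfix h0 hm (L - 1) k' hk'1 (by omega)
  have habC' : ab ∈ subP θ m (resIdx θ m 0) (L - 1) k' := by
    have he : (xh (((L - 1 : ℕ) : ℤ)), xh (((L - 1 : ℕ) : ℤ) + 1)) = ab := by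
      have e1 : ((L - 1 : ℕ) : ℤ) = (L : ℤ) - 1 := by omega
      have e2 : ((L - 1 : ℕ) : ℤ) + 1 = (L : ℤ) := by omega
      rw [e2, e1, hLa, hLb]
    exact he ▸ hcm.1
  rw [class_eq hA hC hcm.2 habC habC', subP_ncard hcf]

lemma window_rec (hr : 2 ≤ r) (hfix : IsSubFix θ xh) (hcan : CanonicalFormSub θ)
    (hprim : PrimitiveSub θ) (hA : subCondA θ m (orbitClosure xh)) (W : ℕ) (N : ℤ) :
    ∃ N' : ℤ, (W : ℤ) + 2 ≤ N' ∧
      ∀ l : ℤ, -(W : ℤ) - 1 ≤ l → l ≤ (W : ℤ) + 1 → xh (N + l) = xh (N' + l) := by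
  obtain ⟨K, hK1, hKb⟩ := pow_big_nat hr (2 * W + 3)
  set R : ℤ := (r : ℤ) ^ K with hR
  have hReq : R = ((r ^ K : ℕ) : ℤ) := by push_cast; rfl
  have hRb : 2 * (W : ℤ) + 3 ≤ R := by rw [hReq]; exact_mod_cast hKb
  set t : ℤ := (N + W + 1) / R with ht
  set s : ℤ := (N + W + 1) % R with hs
  have hs0 : 0 ≤ s := Int.emod_nonneg _ (by omega)
  have hsR : s < R := Int.emod_lt_of_pos _ (by omega)
  have hNt : N + W + 1 = R * t + s := by rw [ht, hs]; exact (Int.mul_ediv_add_emod _ _).symm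
  have hpl : (xh (t - 1), xh t) ∈ legalPairs (orbitClosure xh) :=
    ⟨xh, self_mem_orbitClosure xh, t - 1, rfl, by congr 1; ring⟩
  obtain ⟨L₂, hL₂1, hL₂a, hL₂b⟩ := pair_pos hfix hcan hprim hA hpl
  refine ⟨R * L₂ + s - W - 1, ?_, ?_⟩
  · have h1 : R * 1 ≤ R * L₂ := by
      have h2 : (1 : ℤ) ≤ (L₂ : ℤ) := by exact_mod_cast hL₂1
      exact mul_le_mul_of_nonneg_left h2 (by omega)
    rw [mul_one] at h1
    omega
  intro l hl1 hl2
  set u : ℤ := R + s + l - W - 1 with hu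
  have hu0 : 0 ≤ u := by omega
  have hu2 : u < 2 * R := by omega
  have e1 : N + l = R * (t - 1) + u := by rw [mul_sub, mul_one]; omega
  have e2 : (R * L₂ + s - W - 1) + l = R * ((L₂ : ℤ) - 1) + u := by
    rw [mul_sub, mul_one]; omega
  rcases lt_or_ge u R with hc | hc
  · have hun : (u.toNat : ℤ) = u := Int.toNat_of_nonneg hu0
    have hult : u.toNat < r ^ K := by
      have h3 : (u.toNat : ℤ) < ((r ^ K : ℕ) : ℤ) := by rw [hun, ← hReq]; exact hc
      exact_mod_cast h3
    have f1 : xh (N + l) = wordIter θ K (xh (t - 1)) u.toNat := by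
      rw [e1, show R * (t - 1) + u = (r : ℤ) ^ K * (t - 1) + (u.toNat : ℤ) by rw [hun, hR]]
      exact fix_expand hfix K (t - 1) u.toNat hult
    have f2 : xh ((R * L₂ + s - W - 1) + l) = wordIter θ K (xh ((L₂ : ℤ) - 1)) u.toNat := by
      rw [e2, show R * ((L₂ : ℤ) - 1) + u = (r : ℤ) ^ K * ((L₂ : ℤ) - 1) + (u.toNat : ℤ) by
        rw [hun, hR]]
      exact fix_expand hfix K ((L₂ : ℤ) - 1) u.toNat hult
    rw [f1, f2, hL₂a]
  · have hun : ((u - R).toNat : ℤ) = u - R := Int.toNat_of_nonneg (by omega)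
    have hult : (u - R).toNat < r ^ K := by
      have h3 : ((u - R).toNat : ℤ) < ((r ^ K : ℕ) : ℤ) := by rw [hun, ← hReq]; omega
      exact_mod_cast h3
    have f1 : xh (N + l) = wordIter θ K (xh t) (u - R).toNat := by
      rw [e1, show R * (t - 1) + u = (r : ℤ) ^ K * t + ((u - R).toNat : ℤ) by
        rw [hun, hR]; ring]
      exact fix_expand hfix K t _ hult
    have f2 : xh ((R * L₂ + s - W - 1) + l) = wordIter θ K (xh (L₂ : ℤ)) (u - R).toNat := by
      rw [e2, show R * ((L₂ : ℤ) - 1) + u = (r : ℤ) ^ K * (L₂ : ℤ) + ((u - R).toNat : ℤ) by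
        rw [hun, hR]; ring]
      exact fix_expand hfix K _ _ hult
    rw [f1, f2, hL₂b]

lemma wd_step (hcf : CoincidenceFreeSub θ) (hA : subCondA θ m (orbitClosure xh))
    {n : ℕ} [NeZero n] {c : Fin na × Fin na → Fin n}
    (hc2 : ∀ ab ∈ legalPairs (orbitClosure xh), ∀ cd ∈ legalPairs (orbitClosure xh),
      (c ab = c cd ↔ ∃ C ∈ subClasses θ m, ab ∈ C ∧ cd ∈ C))
    {P Q : Fin na × Fin na} (hP : P ∈ legalPairs (orbitClosure xh))
    (hQ : Q ∈ legalPairs (orbitClosure xh)) (hPQ : c P = c Q) (h : Fin r)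
    (hh1 : 1 ≤ (h : ℕ)) :
    c (θ P.2 ⟨(h : ℕ) - 1, lt_of_le_of_lt (Nat.sub_le _ _) h.isLt⟩, θ P.2 h)
      = c (θ Q.2 ⟨(h : ℕ) - 1, lt_of_le_of_lt (Nat.sub_le _ _) h.isLt⟩, θ Q.2 h) := by
  obtain ⟨C, hC, hPC, hQC⟩ := (hc2 P hP Q hQ).mp hPQ
  obtain ⟨i, him, k, hk1, j, hjk, rfl⟩ := hC
  obtain ⟨p, hpS, hPe⟩ := hPC
  obtain ⟨q, hqS, hQe⟩ := hQC
  set J : ℕ := r * (j + 1) + ((h : ℕ) - 1) with hJd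
  have key : ∀ p' : Fin na,
      (θ (wordIter θ k p' (j+1)) ⟨(h : ℕ) - 1, lt_of_le_of_lt (Nat.sub_le _ _) h.isLt⟩,
        θ (wordIter θ k p' (j+1)) h)
        = (wordIter θ (k+1) p' J, wordIter θ (k+1) p' (J+1)) := by
    intro p'
    rw [wordIter_right, wordIter_right]
    have d1 : J / r = j + 1 := by
      rw [hJd, Nat.mul_add_div (NeZero.pos r), Nat.div_eq_of_lt (by omega)]
    have m1 : J % r = (h : ℕ) - 1 := by
      rw [hJd, Nat.mul_add_mod, Nat.mod_eq_of_lt (by omega)]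
    have hJ1 : J + 1 = r * (j + 1) + (h : ℕ) := by omega
    have d2 : (J + 1) / r = j + 1 := by
      rw [hJ1, Nat.mul_add_div (NeZero.pos r), Nat.div_eq_of_lt h.isLt]
    have m2 : (J + 1) % r = (h : ℕ) := by
      rw [hJ1, Nat.mul_add_mod, Nat.mod_eq_of_lt h.isLt]
    simp only [d1, m1, d2, m2, Fin.eta]
  have hbound : J + 2 ≤ r ^ (k + 1) := by
    have hx : r * (j + 2) ≤ r * r ^ k := Nat.mul_le_mul_left r hjk
    have hpow : r ^ (k + 1) = r * r ^ k := pow_succ' r k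
    have hy : r * (j + 2) = r * (j + 1) + r := by ring
    have hhr : (h : ℕ) < r := h.isLt
    omega
  have hD : subP θ m i J (k+1) ∈ subClasses θ m :=
    ⟨i, him, k + 1, Nat.succ_le_succ (Nat.zero_le k), J, by omega, rfl⟩
  have hP2 : P.2 = wordIter θ k p (j+1) := by rw [hPe]
  have hQ2 : Q.2 = wordIter θ k q (j+1) := by rw [hQe]
  have hmemP : (θ P.2 ⟨(h : ℕ) - 1, lt_of_le_of_lt (Nat.sub_le _ _) h.isLt⟩, θ P.2 h)
      ∈ subP θ m i J (k+1) := by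
    rw [hP2, key p]; exact ⟨p, hpS, rfl⟩
  have hmemQ : (θ Q.2 ⟨(h : ℕ) - 1, lt_of_le_of_lt (Nat.sub_le _ _) h.isLt⟩, θ Q.2 h)
      ∈ subP θ m i J (k+1) := by
    rw [hQ2, key q]; exact ⟨q, hqS, rfl⟩
  exact (hc2 _ (class_legal hA hD hmemP) _ (class_legal hA hD hmemQ)).mpr
    ⟨_, hD, hmemP, hmemQ⟩


end AuxStmt5


/-- If condition (A) holds with `n` distinct classes (labelled by `c`), then
there exist a substitution `φ` of length `r` on `B = Fin n` and a surjective continuous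
2-block sliding block code `Ψ : X_θ → X_φ`, `Ψ(x)_i = [x_{i-1} x_i]`, commuting with the
shift; moreover every fiber of `Ψ` has exactly `cst` elements, where `cst` is the common
cardinality of the classes `P(i,j,k)`. -/
theorem stmt_5 {na r : ℕ} [NeZero na] [NeZero r] (hr : 2 ≤ r)
    (θ : Fin na → Fin r → Fin na)
    (hadm : AdmissibleSub θ) (hprim : PrimitiveSub θ) (hcf : CoincidenceFreeSub θ)
    (hcan : CanonicalFormSub θ)
    (xh : ℤ → Fin na) (d m : ℕ) (hht : HeightData θ xh d m)
    (hA : subCondA θ m (orbitClosure xh))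
    (n : ℕ) [NeZero n] (c : Fin na × Fin na → Fin n)
    (hc1 : ∀ b : Fin n, ∃ ab ∈ legalPairs (orbitClosure xh), c ab = b)
    (hc2 : ∀ ab ∈ legalPairs (orbitClosure xh), ∀ cd ∈ legalPairs (orbitClosure xh),
      (c ab = c cd ↔ ∃ C ∈ subClasses θ m, ab ∈ C ∧ cd ∈ C)) :
    ∃ φ : Fin n → Fin r → Fin n, ∃ y : ℤ → Fin n, IsSubFix φ y ∧
      Set.MapsTo (PsiMap c) (orbitClosure xh) (orbitClosure y) ∧
      Set.SurjOn (PsiMap c) (orbitClosure xh) (orbitClosure y) ∧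
      Continuous (PsiMap c) ∧
      (∀ x : ℤ → Fin na, PsiMap c (shiftF (Fin na) x) = shiftF (Fin n) (PsiMap c x)) ∧
      ∃ cst : ℕ, (∀ C ∈ subClasses θ m, C.ncard = cst) ∧
        ∀ yy ∈ orbitClosure y, {x ∈ orbitClosure xh | PsiMap c x = yy}.ncard = cst := by
  classical
  have hfix : IsSubFix θ xh := hht.1
  have h0 : xh 0 = 0 := hht.2.1
  have hm : 0 < m := hht.2.2.2.2.1
  have xh_pair_legal : ∀ l : ℤ, (xh (l - 1), xh l) ∈ legalPairs (orbitClosure xh) :=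
    fun l => ⟨xh, self_mem_orbitClosure xh, l - 1, rfl, by congr 1; ring⟩
  set y : ℤ → Fin n := PsiMap c xh with hydef
  have y_def : ∀ l : ℤ, y l = c (xh (l - 1), xh l) := fun l => rfl
  choose pk hpkL hpkc using hc1
  set φ : Fin n → Fin r → Fin n := fun b h =>
    if hv : (h : ℕ) = 0 then b
    else c (θ (pk b).2 ⟨(h : ℕ) - 1, lt_of_le_of_lt (Nat.sub_le _ _) h.isLt⟩, θ (pk b).2 h)
    with hφdef
  have xh_r : ∀ nn : ℤ, xh (r * nn) = xh nn := by
    intro nn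
    have h1 := hfix nn ⟨0, NeZero.pos r⟩
    rw [(hcan (xh nn)).1] at h1
    simpa using h1
  have xh_r1 : ∀ nn : ℤ, xh (r * nn - 1) = xh (nn - 1) := by
    intro nn
    have h1 := hfix (nn - 1) ⟨r - 1, Nat.sub_lt (NeZero.pos r) one_pos⟩
    rw [(hcan (xh (nn - 1))).2] at h1
    rw [← h1]
    congr 1
    have e : ((r - 1 : ℕ) : ℤ) = (r : ℤ) - 1 := by
      have : 1 ≤ r := NeZero.pos r
      omega
    rw [e]; ring
  have hsubfix : IsSubFix φ y := by
    intro nn mm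
    by_cases hv : (mm : ℕ) = 0
    · have hφ0 : φ (y nn) mm = y nn := by simp only [hφdef]; exact dif_pos hv
      have hmmz : ((mm : ℕ) : ℤ) = 0 := by rw [hv]; rfl
      rw [hφ0, hmmz, add_zero, y_def, y_def, xh_r, xh_r1]
    · have h1 : 1 ≤ (mm : ℕ) := Nat.one_le_iff_ne_zero.mpr hv
      have hφ1 : φ (y nn) mm
          = c (θ (pk (y nn)).2 ⟨(mm : ℕ) - 1, lt_of_le_of_lt (Nat.sub_le _ _) mm.isLt⟩,
            θ (pk (y nn)).2 mm) := by
        simp only [hφdef]; exact dif_neg hv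
      have lhs1 : xh (r * nn + ((mm : ℕ) : ℤ)) = θ (xh nn) mm := hfix nn mm
      have lhs2 : xh (r * nn + ((mm : ℕ) : ℤ) - 1)
          = θ (xh nn) ⟨(mm : ℕ) - 1, lt_of_le_of_lt (Nat.sub_le _ _) mm.isLt⟩ := by
        have h2 := hfix nn ⟨(mm : ℕ) - 1, lt_of_le_of_lt (Nat.sub_le _ _) mm.isLt⟩
        rw [← h2]
        congr 1
        have e : (((mm : ℕ) - 1 : ℕ) : ℤ) = ((mm : ℕ) : ℤ) - 1 := by omega
        rw [e]; ring
      have wd := wd_step hcf hA hc2 (hpkL (y nn)) (xh_pair_legal nn)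
        (by rw [hpkc (y nn)]; exact y_def nn) mm h1
      rw [y_def, lhs2, lhs1, hφ1]
      exact wd.symm
  have hcont : Continuous (PsiMap c : (ℤ → Fin na) → ℤ → Fin n) := by
    apply continuous_pi
    intro i
    exact (continuous_of_discreteTopology).comp
      ((continuous_apply (i - 1)).prodMk (continuous_apply i))
  have hcomm : ∀ x : ℤ → Fin na,
      PsiMap c (shiftF (Fin na) x) = shiftF (Fin n) (PsiMap c x) := by
    intro x; funext l
    show c (x (l - 1 + 1), x (l + 1)) = c (x (l + 1 - 1), x (l + 1))
    have e : l - 1 + 1 = l + 1 - 1 := by ring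
    rw [e]
  have horbit : ∀ nz : ℤ, PsiMap c (fun k => xh (k + nz)) = fun k => y (k + nz) := by
    intro nz; funext l
    show c (xh (l - 1 + nz), xh (l + nz)) = c (xh (l + nz - 1), xh (l + nz))
    have e : l - 1 + nz = l + nz - 1 := by ring
    rw [e]
  have hmapsTo : Set.MapsTo (PsiMap c) (orbitClosure xh) (orbitClosure y) := by
    intro x hx
    have h1 := image_closure_subset_closure_image
      (s := {w : ℤ → Fin na | ∃ nz : ℤ, w = fun k => xh (k + nz)}) hcont
      (mem_image_of_mem _ hx)
    refine closure_mono ?_ h1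
    rintro _ ⟨z, ⟨nz, rfl⟩, rfl⟩
    exact ⟨nz, horbit nz⟩
  set i₀ : ℕ := resIdx θ m 0 with hi₀
  set cst : ℕ := (subS θ m i₀).ncard with hcstd
  have hclsn : ∀ C ∈ subClasses θ m, C.ncard = cst :=
    class_ncard hfix hcan hcf hprim h0 hm hr hA
  have hcstpos : 0 < cst := by
    rw [hcstd, Set.ncard_pos (Set.toFinite _)]
    exact ⟨0, mem_subS_resIdx hm 0⟩
  have hfiber : ∀ yy ∈ orbitClosure y,
      {x ∈ orbitClosure xh | PsiMap c x = yy}.ncard = cst := by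
    intro yy hyy
    have hCL0 : ∀ l : ℤ, ∃ C ∈ subClasses θ m,
        ∀ P ∈ legalPairs (orbitClosure xh), (c P = yy l ↔ P ∈ C) := by
      intro l
      obtain ⟨N, hN⟩ := orbit_window y hyy {l}
      have hNl : yy l = y (l + N) := hN l (Finset.mem_singleton_self l)
      obtain ⟨C, hC, hPC⟩ := pair_class hA (xh_pair_legal (l + N))
      refine ⟨C, hC, fun P hP => ⟨fun hcP => ?_, fun hPmem => ?_⟩⟩
      · have hcc : c P = c (xh (l + N - 1), xh (l + N)) := by
          rw [hcP, hNl]; exact y_def (l + N)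
        obtain ⟨D, hD, hd1, hd2⟩ := (hc2 P hP _ (xh_pair_legal (l + N))).mp hcc
        rwa [class_eq hA hD hC hd2 hPC] at hd1
      · have hcc : c P = c (xh (l + N - 1), xh (l + N)) :=
          (hc2 P hP _ (xh_pair_legal (l + N))).mpr ⟨C, hC, hPmem, hPC⟩
        rw [hcc, ← y_def, ← hNl]
    choose CL hCLc hCLs using hCL0
    have pair_mem : ∀ x, x ∈ orbitClosure xh → PsiMap c x = yy →
        ∀ l : ℤ, (x (l - 1), x l) ∈ CL l := by
      intro x hx he l
      have hleg : (x (l - 1), x l) ∈ legalPairs (orbitClosure xh) :=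
        ⟨x, hx, l - 1, rfl, by congr 1; ring⟩
      refine (hCLs l _ hleg).mp ?_
      rw [← he]; rfl
    have rigid : ∀ l : ℤ, ∀ P Q : Fin na × Fin na, P ∈ CL l → Q ∈ CL l →
        (P.1 = Q.1 ∨ P.2 = Q.2) → P = Q := by
      intro l P Q hP hQ hor
      obtain ⟨i, him, k, hk1, j, hjk, hrep⟩ := hCLc l
      rw [hrep] at hP hQ
      obtain ⟨p, hpS, hPe⟩ := hP
      obtain ⟨q, hqS, hQe⟩ := hQ
      have hpq : p = q := by
        by_contra hne
        rcases hor with hor1 | hor1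
        · exact wordIter_colInj hcf k hne j (by rw [hPe, hQe] at hor1; exact hor1)
        · exact wordIter_colInj hcf k hne (j + 1) (by rw [hPe, hQe] at hor1; exact hor1)
      rw [hPe, hQe, hpq]
    have hinj : Set.InjOn (fun z : ℤ → Fin na => (z (-1), z 0))
        {x ∈ orbitClosure xh | PsiMap c x = yy} := by
      rintro x ⟨hx1, hx2⟩ x' ⟨hx'1, hx'2⟩ hg
      have h0' : x 0 = x' 0 := congrArg Prod.snd hg
      have hm1 : x (-1) = x' (-1) := congrArg Prod.fst hg
      have F1 : ∀ j : ℕ, x (j : ℤ) = x' (j : ℤ) := by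
        intro j
        induction j with
        | zero => exact h0'
        | succ j ih =>
          have hPl := pair_mem x hx1 hx2 ((j : ℤ) + 1)
          have hQl := pair_mem x' hx'1 hx'2 ((j : ℤ) + 1)
          have e : (j : ℤ) + 1 - 1 = (j : ℤ) := by ring
          have hfst : (x ((j : ℤ) + 1 - 1), x ((j : ℤ) + 1)).1
              = (x' ((j : ℤ) + 1 - 1), x' ((j : ℤ) + 1)).1 := by
            show x ((j : ℤ) + 1 - 1) = x' ((j : ℤ) + 1 - 1)
            rw [e]; exact ih
          have heq := rigid _ _ _ hPl hQl (Or.inl hfst)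
          have h2 := congrArg Prod.snd heq
          push_cast
          exact h2
      have B1 : ∀ j : ℕ, x (-(j : ℤ) - 1) = x' (-(j : ℤ) - 1) := by
        intro j
        induction j with
        | zero => simpa using hm1
        | succ j ih =>
          have hPl := pair_mem x hx1 hx2 (-(j : ℤ) - 1)
          have hQl := pair_mem x' hx'1 hx'2 (-(j : ℤ) - 1)
          have hsnd : (x (-(j : ℤ) - 1 - 1), x (-(j : ℤ) - 1)).2
              = (x' (-(j : ℤ) - 1 - 1), x' (-(j : ℤ) - 1)).2 := ih
          have heq := rigid _ _ _ hPl hQl (Or.inr hsnd)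
          have h1 := congrArg Prod.fst heq
          rw [show -(((j : ℕ) + 1 : ℕ) : ℤ) - 1 = -(j : ℤ) - 1 - 1 by push_cast; ring]
          exact h1
      funext l
      rcases le_or_gt 0 l with hl | hl
      · have e : ((l.toNat : ℕ) : ℤ) = l := Int.toNat_of_nonneg hl
        rw [← e]; exact F1 _
      · have e : -(((-l - 1).toNat : ℕ) : ℤ) - 1 = l := by
          rw [Int.toNat_of_nonneg (by omega)]; ring
        rw [← e]; exact B1 _
    have hstep : ∀ P ∈ CL 0, ∀ W : ℕ, ∃ xw : ℤ → Fin na, xw ∈ orbitClosure xh ∧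
        (xw (-1), xw 0) = P ∧ ∀ l : ℤ, -(W : ℤ) ≤ l → l ≤ (W : ℤ) →
          c (xw (l - 1), xw l) = yy l := by
      intro P hP W
      obtain ⟨N, hN⟩ := orbit_window y hyy (Finset.Icc (-(W : ℤ)) (W : ℤ))
      obtain ⟨N', hN'2, hN'w⟩ := window_rec hr hfix hcan hprim hA W N
      have hmatch : ∀ l : ℤ, -(W : ℤ) ≤ l → l ≤ (W : ℤ) →
          yy l = c (xh (N' + l - 1), xh (N' + l)) := by
        intro l h1 h2
        rw [hN l (Finset.mem_Icc.mpr ⟨h1, h2⟩), y_def]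
        have e1 : xh (l + N - 1) = xh (N' + l - 1) := by
          have h3 := hN'w (l - 1) (by omega) (by omega)
          rw [show N + (l - 1) = l + N - 1 by ring,
            show N' + (l - 1) = N' + l - 1 by ring] at h3
          exact h3
        have e2 : xh (l + N) = xh (N' + l) := by
          have h3 := hN'w l (by omega) (by omega)
          rw [show N + l = l + N by ring] at h3
          exact h3
        rw [e1, e2]
      have hCLl : ∀ l : ℤ, -(W : ℤ) ≤ l → l ≤ (W : ℤ) →
          (xh (N' + l - 1), xh (N' + l)) ∈ CL l := fun l h1 h2 =>
        (hCLs l _ (xh_pair_legal (N' + l))).mp (hmatch l h1 h2).symm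
      obtain ⟨k, hk1, hkb⟩ := pow_big_nat hr (N'.toNat + W + 2)
      have hkZ : N' + (W : ℤ) + 1 ≤ ((r ^ k : ℕ) : ℤ) := by
        have h3 : ((N'.toNat + W + 2 : ℕ) : ℤ) ≤ ((r ^ k : ℕ) : ℤ) := by exact_mod_cast hkb
        push_cast at h3
        omega
      have hrepr : ∀ l : ℤ, -(W : ℤ) ≤ l → l ≤ (W : ℤ) →
          CL l = subP θ m i₀ (N' + l - 1).toNat k := by
        intro l h1 h2
        have hJl : ((N' + l - 1).toNat : ℤ) = N' + l - 1 := Int.toNat_of_nonneg (by omega)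
        have hcm := canon_mem (m := m) hfix h0 hm (N' + l - 1).toNat k hk1 (by omega)
        have e2 : ((N' + l - 1).toNat : ℤ) + 1 = N' + l := by rw [hJl]; ring
        rw [e2, hJl] at hcm
        exact class_eq hA (hCLc l) hcm.2 (hCLl l h1 h2) hcm.1
      have hPrep : P ∈ subP θ m i₀ (N' - 1).toNat k := by
        have h3 := hrepr 0 (by omega) (by omega)
        rw [show N' + 0 - 1 = N' - 1 by ring] at h3
        rw [← h3]
        exact hP
      obtain ⟨q, hqS, hqe⟩ := hPrep
      obtain ⟨lq, hlq1, hlqe⟩ := letter_pos hfix hcan hprim q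
      set B : ℤ := (r : ℤ) ^ k * (lq : ℤ) + N' with hB
      have hval : ∀ l : ℤ, -(W : ℤ) - 1 ≤ l → l ≤ (W : ℤ) →
          xh (l + B) = wordIter θ k q (N' + l).toNat := by
        intro l h1 h2
        have h0le : 0 ≤ N' + l := by omega
        have hlt : (N' + l).toNat < r ^ k := by omega
        have idx : l + B = (r : ℤ) ^ k * (lq : ℤ) + ((N' + l).toNat : ℤ) := by
          rw [hB, Int.toNat_of_nonneg h0le]; ring
        rw [idx, fix_expand hfix k lq _ hlt, hlqe]
      refine ⟨fun u => xh (u + B), subset_closure ⟨B, rfl⟩, ?_, ?_⟩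
      · have e1 := hval (-1) (by omega) (by omega)
        have e2 := hval 0 (by omega) (by omega)
        have t1 : (N' + -1).toNat = (N' - 1).toNat := by omega
        have t2 : (N' + 0).toNat = (N' - 1).toNat + 1 := by omega
        rw [t1] at e1
        rw [t2] at e2
        rw [hqe]
        exact Prod.ext e1 e2
      · intro l h1 h2
        have e1 := hval (l - 1) (by omega) (by omega)
        have e2 := hval l (by omega) (by omega)
        have t1 : (N' + (l - 1)).toNat = (N' + l - 1).toNat := by omega
        have t2 : (N' + l).toNat = (N' + l - 1).toNat + 1 := by omega
        rw [t1] at e1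
        rw [t2] at e2
        have hmem : ((fun u => xh (u + B)) (l - 1), (fun u => xh (u + B)) l)
            ∈ subP θ m i₀ (N' + l - 1).toNat k := ⟨q, hqS, Prod.ext e1 e2⟩
        have hmem' : ((fun u => xh (u + B)) (l - 1), (fun u => xh (u + B)) l) ∈ CL l := by
          rw [hrepr l h1 h2]
          exact hmem
        exact (hCLs l _ (class_legal hA (hCLc l) hmem')).mpr hmem'
    have hsurj : ∀ P ∈ CL 0, ∃ x, (x ∈ orbitClosure xh ∧ PsiMap c x = yy) ∧
        (x (-1), x 0) = P := by
      intro P hP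
      choose f hf1 hf2 hf3 using hstep P hP
      haveI : Filter.NeBot (Filter.map f Filter.atTop) := Filter.map_neBot
      obtain ⟨x, hx⟩ := exists_clusterPt_of_compactSpace (Filter.map f Filter.atTop)
      refine ⟨x, ⟨?_, ?_⟩, ?_⟩
      · exact cluster_closed hx isClosed_closure (Filter.Eventually.of_forall hf1)
      · funext l
        have hS : IsClosed {z : ℤ → Fin na | c (z (l - 1), z l) = yy l} := by
          have he : {z : ℤ → Fin na | c (z (l - 1), z l) = yy l}
              = (fun z : ℤ → Fin na => c (z (l - 1), z l)) ⁻¹' {yy l} := rfl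
          rw [he]
          exact (isClosed_singleton).preimage
            ((continuous_of_discreteTopology).comp
              ((continuous_apply (l - 1)).prodMk (continuous_apply l)))
        have hev : ∀ᶠ W in Filter.atTop,
            f W ∈ {z : ℤ → Fin na | c (z (l - 1), z l) = yy l} := by
          rw [Filter.eventually_atTop]
          exact ⟨l.natAbs, fun W hW => hf3 W l (by omega) (by omega)⟩
        exact cluster_closed hx hS hev
      · have hS : IsClosed {z : ℤ → Fin na | (z (-1), z 0) = P} := by
          have he : {z : ℤ → Fin na | (z (-1), z 0) = P}
              = (fun z : ℤ → Fin na => (z (-1), z 0)) ⁻¹' {P} := rfl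
          rw [he]
          exact (isClosed_singleton).preimage
            ((continuous_apply (-1 : ℤ)).prodMk (continuous_apply (0 : ℤ)))
        exact cluster_closed hx hS (Filter.Eventually.of_forall hf2)
    have himg : (fun z : ℤ → Fin na => (z (-1), z 0)) ''
        {x ∈ orbitClosure xh | PsiMap c x = yy} = CL 0 := by
      apply Set.Subset.antisymm
      · rintro _ ⟨x, ⟨hx1, hx2⟩, rfl⟩
        have h3 := pair_mem x hx1 hx2 0
        rw [show (0 : ℤ) - 1 = -1 by ring] at h3
        exact h3
      · intro P hP
        obtain ⟨x, hx12, hxg⟩ := hsurj P hP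
        exact ⟨x, hx12, hxg⟩
    calc {x ∈ orbitClosure xh | PsiMap c x = yy}.ncard
        = ((fun z : ℤ → Fin na => (z (-1), z 0)) ''
            {x ∈ orbitClosure xh | PsiMap c x = yy}).ncard :=
          (Set.ncard_image_of_injOn hinj).symm
      _ = (CL 0).ncard := by rw [himg]
      _ = cst := hclsn _ (hCLc 0)
  refine ⟨φ, y, hsubfix, hmapsTo, ?_, hcont, hcomm, cst, hclsn, hfiber⟩
  intro yy hyy
  have h1 := hfiber yy hyy
  have h2 : {x ∈ orbitClosure xh | PsiMap c x = yy}.Nonempty := by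
    apply Set.nonempty_of_ncard_ne_zero
    rw [h1]
    omega
  obtain ⟨x, hx1, hx2⟩ := h2
  exact ⟨x, hx1, hx2⟩
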